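/- Any set of distinct slopes (primitive vectors in Z^2 up to sign) with pairwise distances at most 5 has at most 12 elements. -/

import Mathlib

/-- A vector in ℤ² is primitive if its coordinates are coprime. -/
def Primitive (v : ℤ × ℤ) : Prop := Int.gcd v.1 v.2 = 1

/-- The distance between two slopes: absolute value of the determinant. -/
def slopeDist (v w : ℤ × ℤ) : ℤ := |v.1 * w.2 - v.2 * w.1|

/-- Two vectors represent the same slope iff they agree up to sign. -/
def SameSlope (v w : ℤ × ℤ) : Prop := v = w ∨ v = -w

lemma cross_zero_sameSlope {v w : ℤ × ℤ} (hv : Primitive v) (hw : Primitive w)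
    (h : v.1 * w.2 = v.2 * w.1) : SameSlope v w := by
  have cv : IsCoprime v.1 v.2 := Int.isCoprime_iff_gcd_eq_one.mpr hv
  have cw : IsCoprime w.1 w.2 := Int.isCoprime_iff_gcd_eq_one.mpr hw
  have hd1 : v.1 ∣ w.1 := IsCoprime.dvd_of_dvd_mul_left cv ⟨w.2, by linarith⟩
  have hd2 : w.1 ∣ v.1 := IsCoprime.dvd_of_dvd_mul_left cw ⟨v.2, by linarith⟩
  have habs : v.1.natAbs = w.1.natAbs :=
    Nat.dvd_antisymm (Int.natAbs_dvd_natAbs.mpr hd1) (Int.natAbs_dvd_natAbs.mpr hd2)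
  rcases Int.natAbs_eq_natAbs_iff.mp habs with h1 | h1
  · by_cases h0 : v.1 = 0
    · -- v.1 = 0, w.1 = 0, second coords are units
      have hw0 : w.1 = 0 := by omega
      have hv2 : v.2 = 1 ∨ v.2 = -1 := by
        have := hv; unfold Primitive at this; rw [h0] at this
        have h := Int.natAbs_eq_iff.mp (by simpa using this); omega
      have hw2 : w.2 = 1 ∨ w.2 = -1 := by
        have := hw; unfold Primitive at this; rw [hw0] at this
        have h := Int.natAbs_eq_iff.mp (by simpa using this); omega
      rcases hv2 with h2 | h2 <;> rcases hw2 with h3 | h3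
      · left; exact Prod.ext (by omega) (by omega)
      · right; exact Prod.ext (by simp [h0, hw0]) (by simp [h2, h3])
      · right; exact Prod.ext (by simp [h0, hw0]) (by simp [h2, h3])
      · left; exact Prod.ext (by omega) (by omega)
    · left
      have : v.1 * w.2 = v.1 * v.2 := by rw [h, h1]; ring
      exact Prod.ext h1 (mul_left_cancel₀ h0 this).symm
  · by_cases h0 : v.1 = 0
    · have hw0 : w.1 = 0 := by omega
      have hv2 : v.2 = 1 ∨ v.2 = -1 := by
        have := hv; unfold Primitive at this; rw [h0] at this
        have h := Int.natAbs_eq_iff.mp (by simpa using this); omega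
      have hw2 : w.2 = 1 ∨ w.2 = -1 := by
        have := hw; unfold Primitive at this; rw [hw0] at this
        have h := Int.natAbs_eq_iff.mp (by simpa using this); omega
      rcases hv2 with h2 | h2 <;> rcases hw2 with h3 | h3
      · left; exact Prod.ext (by omega) (by omega)
      · right; exact Prod.ext (by simp [h0, hw0]) (by simp [h2, h3])
      · right; exact Prod.ext (by simp [h0, hw0]) (by simp [h2, h3])
      · left; exact Prod.ext (by omega) (by omega)
    · right
      have hw2 : w.2 = -v.2 := by
        have : v.1 * w.2 = v.1 * (-v.2) := by rw [h, h1]; ring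
        exact mul_left_cancel₀ h0 this
      exact Prod.ext (by simp [h1]) (by simp [hw2])

theorem at_most_twelve_slopes_pairwise_dist_le_five
    (S : Finset (ℤ × ℤ))
    (hprim : ∀ v ∈ S, Primitive v)
    (hdistinct : ∀ v ∈ S, ∀ w ∈ S, v ≠ w → ¬ SameSlope v w)
    (hdist : ∀ v ∈ S, ∀ w ∈ S, v ≠ w → slopeDist v w ≤ 5) :
    S.card ≤ 12 := by
  classical
  haveI : Fact (Nat.Prime 7) := ⟨by norm_num⟩
  set f : ℤ × ℤ → Option (ZMod 7) := fun v =>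
    if (v.1 : ZMod 7) = 0 then none else some ((v.2 : ZMod 7) / (v.1 : ZMod 7)) with hf
  have hinj : Set.InjOn f S := by
    intro v hv w hw hfvw
    by_contra hne
    -- determinant is nonzero and bounded by 5
    have hns : ¬ SameSlope v w := hdistinct v hv w hw hne
    have hdet0 : v.1 * w.2 - v.2 * w.1 ≠ 0 := by
      intro h
      exact hns (cross_zero_sameSlope (hprim v hv) (hprim w hw) (by linarith))
    have hdet5 : |v.1 * w.2 - v.2 * w.1| ≤ 5 := hdist v hv w hw hne
    -- from f v = f w, the determinant is ≡ 0 mod 7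
    have hmod : ((v.1 * w.2 - v.2 * w.1 : ℤ) : ZMod 7) = 0 := by
      simp only [hf] at hfvw
      by_cases h1 : (v.1 : ZMod 7) = 0
      · by_cases h2 : (w.1 : ZMod 7) = 0
        · push_cast
          rw [h1, h2]; ring
        · simp [h1, h2] at hfvw
      · by_cases h2 : (w.1 : ZMod 7) = 0
        · simp [h1, h2] at hfvw
        · simp only [if_neg h1, if_neg h2, Option.some.injEq] at hfvw
          have : (v.2 : ZMod 7) * w.1 = (w.2 : ZMod 7) * v.1 := by
            field_simp at hfvw
            linear_combination hfvw
          push_cast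
          linear_combination -this
    have hdvd : (7 : ℤ) ∣ v.1 * w.2 - v.2 * w.1 :=
      (ZMod.intCast_zmod_eq_zero_iff_dvd _ 7).mp hmod
    have h7 : (7 : ℤ) ≤ |v.1 * w.2 - v.2 * w.1| :=
      Int.le_of_dvd (abs_pos.mpr hdet0) ((dvd_abs _ _).mpr hdvd)
    linarith
  have := Finset.card_le_card_of_injOn f (fun _ _ => Finset.mem_univ _) hinj
  simpa using this.trans (by simp)
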